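/- For any real number y and any positive integer k, the inequality {y}(1 - {y}) ≤ k · {y/k}(1 - {y/k}) holds, where {x} = x - ⌊x⌋ denotes the fractional part of x. -/

import Mathlib

/-- For any real `y` and positive integer `k`,
`{y}(1 - {y}) ≤ k · {y/k}(1 - {y/k})`, where `{x}` is the fractional part. -/
theorem fract_mul_one_sub_le (y : ℝ) (k : ℕ) (hk : 0 < k) :
    Int.fract y * (1 - Int.fract y) ≤
      (k : ℝ) * (Int.fract (y / (k : ℝ)) * (1 - Int.fract (y / (k : ℝ)))) := by
  rcases eq_or_lt_of_le (Nat.one_le_iff_ne_zero.mpr hk.ne') with h1 | h2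
  · -- k = 1
    have : k = 1 := h1.symm
    subst this
    simp
  · -- k ≥ 2
    have hk0 : (k : ℝ) ≠ 0 := by positivity
    have hk2 : (2 : ℝ) ≤ (k : ℝ) := by exact_mod_cast h2
    set f : ℝ := Int.fract (y / (k : ℝ)) with hf
    have hf0 : 0 ≤ f := Int.fract_nonneg _
    have hf1 : f < 1 := Int.fract_lt_one _
    set m : ℤ := ⌊(k : ℝ) * f⌋ with hm
    have hfy : Int.fract y = (k : ℝ) * f - (m : ℝ) := by
      have h1 : Int.fract y = Int.fract ((k : ℝ) * f) := by
        rw [Int.fract_eq_fract]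
        refine ⟨(k : ℤ) * ⌊y / (k : ℝ)⌋, ?_⟩
        rw [hf, Int.fract]
        push_cast
        field_simp
        ring
      rw [h1, Int.fract]
    have hm0 : (0 : ℝ) ≤ (m : ℝ) := by
      have : (0 : ℤ) ≤ m := Int.floor_nonneg.mpr (by positivity)
      exact_mod_cast this
    have hmk : (m : ℝ) ≤ (k : ℝ) - 1 := by
      have h1 : (k : ℝ) * f < (k : ℝ) := by nlinarith
      have h2 : m < (k : ℤ) := Int.floor_lt.mpr (by exact_mod_cast h1)
      have : m ≤ (k : ℤ) - 1 := by omega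
      exact_mod_cast this
    rw [hfy]
    nlinarith [sq_nonneg (((k : ℝ) - 1) * ((k : ℝ) * f) - (k : ℝ) * (m : ℝ)),
      mul_nonneg (mul_nonneg (by positivity : (0:ℝ) ≤ (k:ℝ)) hm0)
        (by linarith : (0:ℝ) ≤ (k : ℝ) - 1 - (m : ℝ)),
      mul_pos (by linarith : (0:ℝ) < (k:ℝ) - 1) (by positivity : (0:ℝ) < (k:ℝ))]
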